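/- For every integer n ≥ 2, the graph (G_n)_{x_1x_2} := G_n ∖ (N(x_1) ∪ N(x_2)) is isomorphic to H_{n−1}. -/

import Mathlib

open SimpleGraph

variable {V : Type*} {W : Type*}

/-- The open neighborhood `N(x)` of a vertex, as a set. -/
def nbhd (G : SimpleGraph V) (x : V) : Set V := {u | G.Adj x u}

/-- The closed neighborhood `N[x]` of a vertex. -/
def closedNbhd (G : SimpleGraph V) (x : V) : Set V := insert x {u | G.Adj x u}

/-- The degree of a vertex. -/
noncomputable def deg (G : SimpleGraph V) (x : V) : ℕ := (nbhd G x).ncard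

/-- `S` is an independent set of vertices of `G`. -/
def IsIndep (G : SimpleGraph V) (S : Set V) : Prop :=
  ∀ u ∈ S, ∀ w ∈ S, ¬ G.Adj u w

/-- `S` is an independent set contained in `A`, i.e. an independent set of the
induced subgraph of `G` on `A`. -/
def IsIndepOn (G : SimpleGraph V) (A S : Set V) : Prop :=
  S ⊆ A ∧ IsIndep G S

/-- `S` is a maximal independent set of the induced subgraph of `G` on `A`. -/
def IsMaxIndepOn (G : SimpleGraph V) (A S : Set V) : Prop :=
  IsIndepOn G A S ∧ ∀ T : Set V, IsIndepOn G A T → S ⊆ T → S = T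

/-- A graph is well-covered if all its maximal independent sets have the same
cardinality. -/
def WellCovered (G : SimpleGraph V) : Prop :=
  ∀ S T : Set V, IsMaxIndepOn G Set.univ S → IsMaxIndepOn G Set.univ T →
    S.ncard = T.ncard

/-- The independence number `α(G)` of a graph. -/
noncomputable def indepNum (G : SimpleGraph V) : ℕ :=
  sSup {n : ℕ | ∃ S : Set V, IsIndep G S ∧ S.ncard = n}

/-- `VDOn G A` means: the induced subgraph of `G` on `A` is vertex decomposable,
via the recursive graph-theoretic characterization: it has no edges, or there is
a vertex `v ∈ A` such that both `G∖v` and `G∖N[v]` (within `A`) are vertex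
decomposable and no independent set of `G∖N[v]` is a maximal independent set
of `G∖v`. -/
inductive VDOn (G : SimpleGraph V) : Set V → Prop
  | no_edges (A : Set V) (h : ∀ u ∈ A, ∀ w ∈ A, ¬ G.Adj u w) : VDOn G A
  | step (A : Set V) (v : V) (hv : v ∈ A)
      (hdel : VDOn G (A \ {v}))
      (hlk : VDOn G (A \ closedNbhd G v))
      (hshed : ∀ S : Set V, IsIndepOn G (A \ closedNbhd G v) S →
        ¬ IsMaxIndepOn G (A \ {v}) S) : VDOn G A

/-- A graph is vertex decomposable. -/
def VertexDecomposable (G : SimpleGraph V) : Prop := VDOn G Set.univ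

/-- `c` lists the vertices of an `n`-cycle of `G` in cyclic order. -/
def IsCycleMap {n : ℕ} (G : SimpleGraph V) (c : ZMod n → V) : Prop :=
  Function.Injective c ∧ ∀ i : ZMod n, G.Adj (c i) (c (i + 1))

/-- A vertex is simplicial if its closed neighborhood induces a complete graph. -/
def IsSimplicial (G : SimpleGraph V) (x : V) : Prop :=
  ∀ u w : V, G.Adj x u → G.Adj x w → u ≠ w → G.Adj u w

/-- A basic 5-cycle: a 5-cycle containing no two adjacent vertices that both
have degree at least 3 in `G`. -/
def IsBasic5Cycle (G : SimpleGraph V) (c : ZMod 5 → V) : Prop :=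
  IsCycleMap G c ∧ ∀ i : ZMod 5, ¬(3 ≤ deg G (c i) ∧ 3 ≤ deg G (c (i + 1)))

/-- A basic 3-cycle: a 3-cycle containing at least one vertex of degree 2. -/
def IsBasic3Cycle (G : SimpleGraph V) (c : ZMod 3 → V) : Prop :=
  IsCycleMap G c ∧ ∃ i : ZMod 3, deg G (c i) = 2

/-- `x` belongs to a simplex of `G`, i.e. to the closed neighborhood of a
simplicial vertex. -/
def InSimplex (G : SimpleGraph V) (x : V) : Prop :=
  ∃ v : V, IsSimplicial G v ∧ x ∈ closedNbhd G v

/-- `x` lies on a basic 5-cycle of `G`. -/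
def OnBasic5Cycle (G : SimpleGraph V) (x : V) : Prop :=
  ∃ c : ZMod 5 → V, IsBasic5Cycle G c ∧ x ∈ Set.range c

/-- A basic 4-cycle, labelled so that `c 0` and `c 1` are two adjacent vertices
of degree two, and the remaining two vertices `c 2`, `c 3` each belong to a
simplex or to a basic 5-cycle of `G`.  The set `B(Q)` of such a labelled basic
4-cycle is `{c 0, c 1}`. -/
def IsBasic4Cycle (G : SimpleGraph V) (c : ZMod 4 → V) : Prop :=
  IsCycleMap G c ∧ deg G (c 0) = 2 ∧ deg G (c 1) = 2 ∧
    (InSimplex G (c 2) ∨ OnBasic5Cycle G (c 2)) ∧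
    (InSimplex G (c 3) ∨ OnBasic5Cycle G (c 3))

/-- The class `SQC`: the vertex set is partitioned by the closed neighborhoods
of `m` simplicial vertices, the vertex sets of `s` basic 5-cycles and the sets
`B(Q)` of `t` basic 4-cycles. -/
def InSQC (G : SimpleGraph V) : Prop :=
  ∃ (m s t : ℕ) (x : Fin m → V) (c : Fin s → ZMod 5 → V) (q : Fin t → ZMod 4 → V),
    (∀ i, IsSimplicial G (x i)) ∧
    (∀ j, IsBasic5Cycle G (c j)) ∧
    (∀ k, IsBasic4Cycle G (q k)) ∧
    (∀ v : V, ∃! p : Fin m ⊕ Fin s ⊕ Fin t,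
      match p with
      | Sum.inl i => v ∈ closedNbhd G (x i)
      | Sum.inr (Sum.inl j) => v ∈ Set.range (c j)
      | Sum.inr (Sum.inr k) => v = q k 0 ∨ v = q k 1)

/-- The class `SC`: the vertex set is partitioned by the closed neighborhoods
of `m` simplicial vertices and the vertex sets of `s` basic 5-cycles. -/
def InSC (G : SimpleGraph V) : Prop :=
  ∃ (m s : ℕ) (x : Fin m → V) (c : Fin s → ZMod 5 → V),
    (∀ i, IsSimplicial G (x i)) ∧
    (∀ j, IsBasic5Cycle G (c j)) ∧
    (∀ v : V, ∃! p : Fin m ⊕ Fin s,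
      match p with
      | Sum.inl i => v ∈ closedNbhd G (x i)
      | Sum.inr j => v ∈ Set.range (c j))

/-- `{u, w}` is a pendant edge of `G`: an edge incident with a vertex of
degree 1. -/
def PendantEdge (G : SimpleGraph V) (u w : V) : Prop :=
  G.Adj u w ∧ (deg G u = 1 ∨ deg G w = 1)

/-- `P(G)`: vertices incident with pendant edges. -/
def pendantVerts (G : SimpleGraph V) : Set V := {v | ∃ u, PendantEdge G v u}

/-- `C(G)`: vertices lying on basic 5-cycles. -/
def basic5Verts (G : SimpleGraph V) : Set V := {v | OnBasic5Cycle G v}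

/-- The class `PC`: `V(G) = P(G) ∪ C(G)` with `P(G) ∩ C(G) = ∅`, the basic
5-cycles partition `C(G)` (i.e. are pairwise vertex-disjoint), and the pendant
edges form a perfect matching of `P(G)`. -/
def InPC (G : SimpleGraph V) : Prop :=
  pendantVerts G ∪ basic5Verts G = Set.univ ∧
  pendantVerts G ∩ basic5Verts G = ∅ ∧
  (∀ c c' : ZMod 5 → V, IsBasic5Cycle G c → IsBasic5Cycle G c' →
    Set.range c = Set.range c' ∨ Disjoint (Set.range c) (Set.range c')) ∧
  (∀ v ∈ pendantVerts G, ∃! u : V, PendantEdge G v u)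

/-- The induced subgraph of `G` on `B` has no cut vertex: removing any vertex
of `B` leaves it (pre)connected. -/
def NoCutVertexOn (G : SimpleGraph V) (B : Set V) : Prop :=
  ∀ v ∈ B, (G.induce (B \ {v})).Preconnected

/-- `B` is (the vertex set of) a block of `G`: a maximal connected induced
subgraph without a cut vertex. -/
def IsBlockOf (G : SimpleGraph V) (B : Set V) : Prop :=
  B.Nonempty ∧ (G.induce B).Connected ∧ NoCutVertexOn G B ∧
  ∀ B' : Set V, B ⊆ B' → (G.induce B').Connected → NoCutVertexOn G B' → B' = B

/-- The induced subgraph of `G` on `B` is complete. -/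
def IsCompleteOn (G : SimpleGraph V) (B : Set V) : Prop :=
  ∀ u ∈ B, ∀ w ∈ B, u ≠ w → G.Adj u w

/-- The induced subgraph of `G` on `B` is a cycle. -/
def IsCycleOn (G : SimpleGraph V) (B : Set V) : Prop :=
  ∃ n : ℕ, 3 ≤ n ∧ ∃ c : ZMod n → V, Function.Injective c ∧ Set.range c = B ∧
    ∀ i j : ZMod n, G.Adj (c i) (c j) ↔ (j = i + 1 ∨ i = j + 1)

/-- A block-cactus graph: every block is complete or a cycle. -/
def IsBlockCactus (G : SimpleGraph V) : Prop :=
  ∀ B : Set V, IsBlockOf G B → IsCompleteOn G B ∨ IsCycleOn G B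

/-- A cactus graph: connected, and any two (distinct) cycles have at most one
vertex in common. -/
def IsCactus (G : SimpleGraph V) : Prop :=
  G.Connected ∧
  ∀ (n m : ℕ), 3 ≤ n → 3 ≤ m → ∀ (c : ZMod n → V) (c' : ZMod m → V),
    IsCycleMap G c → IsCycleMap G c' →
    Set.range c = Set.range c' ∨ (Set.range c ∩ Set.range c').Subsingleton

/-- `S` is a pendant edge of `G` incident with `v`. -/
def IncidentPendant (G : SimpleGraph V) (v : V) (S : Set V) : Prop :=
  ∃ u, PendantEdge G v u ∧ S = {v, u}

/-- `S` is (the vertex set of) a basic 3-cycle of `G` through `v`. -/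
def IncidentBasic3 (G : SimpleGraph V) (v : V) (S : Set V) : Prop :=
  ∃ c : ZMod 3 → V, IsBasic3Cycle G c ∧ Set.range c = S ∧ v ∈ S

/-- `S` is (the vertex set of) a basic 4-cycle of `G` through `v`. -/
def IncidentBasic4 (G : SimpleGraph V) (v : V) (S : Set V) : Prop :=
  ∃ c : ZMod 4 → V, IsBasic4Cycle G c ∧ Set.range c = S ∧ v ∈ S

/-- `S` is (the vertex set of) a basic 5-cycle of `G` through `v`. -/
def IncidentBasic5 (G : SimpleGraph V) (v : V) (S : Set V) : Prop :=
  ∃ c : ZMod 5 → V, IsBasic5Cycle G c ∧ Set.range c = S ∧ v ∈ S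

/-- `H` is a minor of `G`, witnessed by pairwise disjoint connected branch
sets. -/
def IsMinorOf (H : SimpleGraph W) (G : SimpleGraph V) : Prop :=
  ∃ f : W → Set V,
    (∀ w, (G.induce (f w)).Connected) ∧
    (∀ w w', w ≠ w' → Disjoint (f w) (f w')) ∧
    (∀ w w', H.Adj w w' → ∃ a ∈ f w, ∃ b ∈ f w', G.Adj a b)

/-- Planarity, via Wagner's characterization: a graph is planar iff it has
neither `K₅` nor `K₃,₃` as a minor. -/
def IsPlanar (G : SimpleGraph V) : Prop :=
  ¬ IsMinorOf (⊤ : SimpleGraph (Fin 5)) G ∧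
  ¬ IsMinorOf (completeBipartiteGraph (Fin 3) (Fin 3)) G

/-- The class `W₂`: a well-covered graph such that deleting any vertex leaves a
well-covered graph with the same independence number. -/
def InW2 (G : SimpleGraph V) : Prop :=
  WellCovered G ∧ ∀ x : V,
    WellCovered (G.induce ({x}ᶜ : Set V)) ∧
    _root_.indepNum (G.induce ({x}ᶜ : Set V)) = _root_.indepNum G

/-- The edge relation of the graph `G_n`, on vertex labels `1, …, 3n-1`
(the vertex `x_i` has label `i`). -/
def gnRel (n : ℕ) (a b : ℕ) : Prop :=
  (a = 1 ∧ b = 2) ∨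
  (∃ k : ℕ, 1 ≤ k ∧ k ≤ n - 1 ∧
    ((a = 3 * k - 1 ∧ b = 3 * k) ∨ (a = 3 * k ∧ b = 3 * k + 1) ∨
     (a = 3 * k + 1 ∧ b = 3 * k + 2) ∨ (a = 3 * k + 2 ∧ b = 3 * k - 2))) ∨
  (∃ l : ℕ, 2 ≤ l ∧ l ≤ n - 1 ∧ a = 3 * l - 3 ∧ b = 3 * l)

/-- The graph `G_n`, with vertex set `{x_1, …, x_{3n-1}}`; the vertex `x_i` is
represented by the element of `Fin (3*n-1)` with value `i - 1`. -/
def Gn (n : ℕ) : SimpleGraph (Fin (3 * n - 1)) :=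
  SimpleGraph.fromRel (fun a b => gnRel n (a.1 + 1) (b.1 + 1))

/-- The graph `H_n = G_n ∖ x_{3n-1}`, with vertex set `{x_1, …, x_{3n-2}}`;
the vertex `x_i` is represented by the element of `Fin (3*n-2)` with value
`i - 1`. -/
def Hn (n : ℕ) : SimpleGraph (Fin (3 * n - 2)) :=
  SimpleGraph.fromRel (fun a b => gnRel n (a.1 + 1) (b.1 + 1))

/-- Half of the arithmetic characterization of the edge relation of `G_n`. -/
private def R'' (n a b : ℕ) : Prop :=
  b = a + 1 ∨
  (b = a + 3 ∧ a % 3 = 0 ∧ 3 ≤ a ∧ a + 6 ≤ 3*n) ∨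
  (b = a + 4 ∧ a % 3 = 1 ∧ a + 5 ≤ 3*n)

private lemma gnRel_consec (n a b : ℕ) (h1 : 1 ≤ a) (h2 : b = a + 1) (h3 : b + 1 ≤ 3*n) :
    gnRel n a b := by
  by_cases ha : a = 1
  · exact Or.inl ⟨ha, by omega⟩
  · exact Or.inr (Or.inl ⟨(a+1)/3, by omega, by omega, by omega⟩)

private lemma gnRel_plus3 (n a b : ℕ) (h0 : a % 3 = 0) (h1 : 3 ≤ a) (h2 : a + 6 ≤ 3*n)
    (h3 : b = a + 3) : gnRel n a b :=
  Or.inr (Or.inr ⟨a/3+1, by omega, by omega, by omega, by omega⟩)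

private lemma gnRel_plus4 (n a b : ℕ) (h0 : a % 3 = 1) (h1 : a + 5 ≤ 3*n)
    (h3 : b = a + 4) : gnRel n b a :=
  Or.inr (Or.inl ⟨(a+2)/3, by omega, by omega, by omega⟩)

private lemma relIff (n a b : ℕ) (ha : 1 ≤ a) (hb : 1 ≤ b) (ha' : a + 1 ≤ 3*n)
    (hb' : b + 1 ≤ 3*n) :
    (¬ a = b ∧ (gnRel n a b ∨ gnRel n b a)) ↔ (R'' n a b ∨ R'' n b a) := by
  constructor
  · rintro ⟨hne, (h|h)⟩
    · rcases h with ⟨rfl, rfl⟩ |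
        ⟨k, hk1, hk2, (⟨rfl,rfl⟩|⟨rfl,rfl⟩|⟨rfl,rfl⟩|⟨rfl,rfl⟩)⟩ | ⟨l, hl1, hl2, rfl, rfl⟩
      · exact Or.inl (Or.inl (by omega))
      · exact Or.inl (Or.inl (by omega))
      · exact Or.inl (Or.inl (by omega))
      · exact Or.inl (Or.inl (by omega))
      · exact Or.inr (Or.inr (Or.inr ⟨by omega, by omega, by omega⟩))
      · exact Or.inl (Or.inr (Or.inl ⟨by omega, by omega, by omega, by omega⟩))
    · rcases h with ⟨rfl, rfl⟩ |
        ⟨k, hk1, hk2, (⟨rfl,rfl⟩|⟨rfl,rfl⟩|⟨rfl,rfl⟩|⟨rfl,rfl⟩)⟩ | ⟨l, hl1, hl2, rfl, rfl⟩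
      · exact Or.inr (Or.inl (by omega))
      · exact Or.inr (Or.inl (by omega))
      · exact Or.inr (Or.inl (by omega))
      · exact Or.inr (Or.inl (by omega))
      · exact Or.inl (Or.inr (Or.inr ⟨by omega, by omega, by omega⟩))
      · exact Or.inr (Or.inr (Or.inl ⟨by omega, by omega, by omega, by omega⟩))
  · rintro (h|h)
    · refine ⟨by unfold R'' at h; omega, ?_⟩
      rcases h with h | ⟨h1,h2,h3,h4⟩ | ⟨h1,h2,h3⟩
      · exact Or.inl (gnRel_consec n a b ha h (by omega))
      · exact Or.inl (gnRel_plus3 n a b h2 h3 h4 h1)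
      · exact Or.inr (gnRel_plus4 n a b h2 h3 h1)
    · refine ⟨by unfold R'' at h; omega, ?_⟩
      rcases h with h | ⟨h1,h2,h3,h4⟩ | ⟨h1,h2,h3⟩
      · exact Or.inr (gnRel_consec n b a hb h (by omega))
      · exact Or.inr (gnRel_plus3 n b a h2 h3 h4 h1)
      · exact Or.inl (gnRel_plus4 n b a h2 h3 h1)

private lemma gadj_iff (n : ℕ) (x y : Fin (3*n-1)) :
    (Gn n).Adj x y ↔ (R'' n (x.1+1) (y.1+1) ∨ R'' n (y.1+1) (x.1+1)) := by
  have hx := x.isLt; have hy := y.isLt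
  have h := relIff n (x.1+1) (y.1+1) (by omega) (by omega) (by omega) (by omega)
  rw [Gn, SimpleGraph.fromRel_adj]
  constructor
  · rintro ⟨hne, hr⟩
    exact h.mp ⟨by simp only [Ne, Fin.ext_iff] at hne; omega, hr⟩
  · intro hr
    obtain ⟨hne, hr'⟩ := h.mpr hr
    exact ⟨by simp only [Ne, Fin.ext_iff]; omega, hr'⟩

private lemma hadj_iff (m : ℕ) (x y : Fin (3*m-2)) :
    (Hn m).Adj x y ↔ (R'' m (x.1+1) (y.1+1) ∨ R'' m (y.1+1) (x.1+1)) := by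
  have hx := x.isLt; have hy := y.isLt
  have h := relIff m (x.1+1) (y.1+1) (by omega) (by omega) (by omega) (by omega)
  rw [Hn, SimpleGraph.fromRel_adj]
  constructor
  · rintro ⟨hne, hr⟩
    exact h.mp ⟨by simp only [Ne, Fin.ext_iff] at hne; omega, hr⟩
  · intro hr
    obtain ⟨hne, hr'⟩ := h.mpr hr
    exact ⟨by simp only [Ne, Fin.ext_iff]; omega, hr'⟩

/-- The vertex map (on 0-indexed values) from the complement to `H_{n-1}`. -/
private def fwd (n v : ℕ) : ℕ :=
  if v = 3 then 3*n-6 else if v ≤ 7 then v + 3*n - 14 else 3*n - v - 2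

/-- The inverse vertex map. -/
private def bwd (n j : ℕ) : ℕ :=
  if j = 3*n-6 then 3 else if 3*n ≤ j + 9 then j + 14 - 3*n else 3*n - j - 2

/-- Specification of the label-level vertex map `u ↦ i`. -/
private def spec (n u i : ℕ) : Prop :=
  (u = 4 ∧ i + 5 = 3*n) ∨ (6 ≤ u ∧ u ≤ 8 ∧ i + 14 = u + 3*n) ∨ (9 ≤ u ∧ i + u = 3*n)

private lemma fwd_spec (n v : ℕ) (hn : 2 ≤ n) (hv : v = 3 ∨ 5 ≤ v) (hv' : v + 2 ≤ 3*n) :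
    spec n (v+1) (fwd n v + 1) := by
  unfold fwd spec
  split_ifs <;> omega

private lemma keyHalfFwd (n u v i j : ℕ) (hn : 2 ≤ n) (hu : spec n u i) (hv : spec n v j)
    (hu' : u + 1 ≤ 3*n) (hv' : v + 1 ≤ 3*n) (h : R'' n u v) :
    R'' (n-1) i j ∨ R'' (n-1) j i := by
  unfold spec at hu hv
  unfold R'' at h ⊢
  rcases h with h | ⟨h1,h2,h3,h4⟩ | ⟨h1,h2,h3⟩
  · by_cases c1 : u = 8
    · exact Or.inr (Or.inr (Or.inl ⟨by omega, by omega, by omega, by omega⟩))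
    · by_cases c2 : u ≤ 7
      · exact Or.inl (Or.inl (by omega))
      · exact Or.inr (Or.inl (by omega))
  · by_cases c1 : u = 6
    · exact Or.inr (Or.inl (by omega))
    · exact Or.inr (Or.inr (Or.inl ⟨by omega, by omega, by omega, by omega⟩))
  · by_cases c1 : u = 4
    · exact Or.inr (Or.inl (by omega))
    · exact Or.inr (Or.inr (Or.inr ⟨by omega, by omega, by omega⟩))

private lemma keyHalfBwd (n u v i j : ℕ) (hn : 2 ≤ n) (hu : spec n u i) (hv : spec n v j)
    (hu' : u + 1 ≤ 3*n) (hv' : v + 1 ≤ 3*n) (h : R'' (n-1) i j) :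
    R'' n u v ∨ R'' n v u := by
  unfold spec at hu hv
  unfold R'' at h ⊢
  rcases h with h | ⟨h1,h2,h3,h4⟩ | ⟨h1,h2,h3⟩
  · by_cases c1 : 3*n ≤ i + 9
    · by_cases c2 : i + 9 = 3*n
      · exact Or.inr (Or.inr (Or.inl ⟨by omega, by omega, by omega, by omega⟩))
      · by_cases c3 : i + 6 = 3*n
        · exact Or.inr (Or.inr (Or.inr ⟨by omega, by omega, by omega⟩))
        · exact Or.inl (Or.inl (by omega))
    · exact Or.inr (Or.inl (by omega))
  · by_cases c1 : i + 9 = 3*n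
    · exact Or.inr (Or.inl (by omega))
    · exact Or.inr (Or.inr (Or.inl ⟨by omega, by omega, by omega, by omega⟩))
  · exact Or.inr (Or.inr (Or.inr ⟨by omega, by omega, by omega⟩))

/-- For `n ≥ 2`, the graph `(G_n)_{x_1 x_2} = G_n ∖ (N(x_1) ∪ N(x_2))`
is isomorphic to `H_{n-1}`.  (The vertex `x_i` is the element of `Fin (3n-1)`
with value `i - 1`.) -/
theorem stmt14 (n : ℕ) (hn : 2 ≤ n) :
    Nonempty ((Gn n).induce
      ((nbhd (Gn n) ⟨0, by omega⟩ ∪ nbhd (Gn n) ⟨1, by omega⟩)ᶜ) ≃g Hn (n - 1)) := by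
  classical
  have hA : ∀ v : Fin (3*n-1),
      (v ∈ ((nbhd (Gn n) ⟨0, by omega⟩ ∪ nbhd (Gn n) ⟨1, by omega⟩)ᶜ : Set (Fin (3*n-1))))
        ↔ (v.1 = 3 ∨ 5 ≤ v.1) := by
    intro v
    have hv := v.isLt
    have hAdj0 : ∀ w : Fin (3*n-1), (Gn n).Adj ⟨0, by omega⟩ w ↔
        (R'' n 1 (w.1+1) ∨ R'' n (w.1+1) 1) := fun w => gadj_iff n ⟨0, by omega⟩ w
    have hAdj1 : ∀ w : Fin (3*n-1), (Gn n).Adj ⟨1, by omega⟩ w ↔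
        (R'' n 2 (w.1+1) ∨ R'' n (w.1+1) 2) := fun w => gadj_iff n ⟨1, by omega⟩ w
    simp only [Set.mem_compl_iff, Set.mem_union, nbhd, Set.mem_setOf_eq, not_or]
    constructor
    · rintro ⟨h1, h2⟩
      by_contra hc
      rcases (by omega : v.1 = 0 ∨ v.1 = 1 ∨ v.1 = 2 ∨ v.1 = 4) with h|h|h|h
      · refine absurd ((hAdj1 v).mpr ?_) h2
        exact Or.inr (by unfold R''; exact Or.inl (by omega))
      · refine absurd ((hAdj0 v).mpr ?_) h1
        exact Or.inl (by unfold R''; exact Or.inl (by omega))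
      · refine absurd ((hAdj1 v).mpr ?_) h2
        exact Or.inl (by unfold R''; exact Or.inl (by omega))
      · refine absurd ((hAdj0 v).mpr ?_) h1
        exact Or.inl (by unfold R''; exact Or.inr (Or.inr ⟨by omega, by omega, by omega⟩))
    · intro h
      constructor
      · intro hadj
        have h' := (hAdj0 v).mp hadj
        unfold R'' at h'
        omega
      · intro hadj
        have h' := (hAdj1 v).mp hadj
        unfold R'' at h'
        omega
  refine ⟨⟨⟨fun v => ⟨fwd n v.1.1, ?_⟩, fun j => ⟨⟨bwd n j.1, ?_⟩, ?_⟩, ?_, ?_⟩, ?_⟩⟩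
  · have hv := (hA v.1).mp v.2
    have hv2 := v.1.isLt
    unfold fwd
    split_ifs <;> omega
  · have hj := j.isLt
    unfold bwd
    split_ifs <;> omega
  · rw [hA]
    have hj := j.isLt
    show bwd n j.1 = 3 ∨ 5 ≤ bwd n j.1
    unfold bwd
    split_ifs <;> omega
  · intro v
    apply Subtype.ext
    apply Fin.ext
    have hv := (hA v.1).mp v.2
    have hv2 := v.1.isLt
    show bwd n (fwd n v.1.1) = v.1.1
    unfold fwd bwd
    split_ifs <;> omega
  · intro j
    apply Fin.ext
    have hj := j.isLt
    show fwd n (bwd n j.1) = j.1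
    unfold fwd bwd
    split_ifs <;> omega
  · intro a b
    have ha := (hA a.1).mp a.2
    have hb := (hA b.1).mp b.2
    have ha2 := a.1.isLt
    have hb2 := b.1.isLt
    have hu : spec n (a.1.1 + 1) (fwd n a.1.1 + 1) := fwd_spec n a.1.1 hn ha (by omega)
    have hv : spec n (b.1.1 + 1) (fwd n b.1.1 + 1) := fwd_spec n b.1.1 hn hb (by omega)
    refine Iff.trans (hadj_iff (n-1) _ _) (Iff.trans ?_ (gadj_iff n a.1 b.1).symm)
    constructor
    · rintro (h|h)
      · exact keyHalfBwd n (a.1.1+1) (b.1.1+1) (fwd n a.1.1 + 1) (fwd n b.1.1 + 1) hn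
          hu hv (by omega) (by omega) h
      · exact (keyHalfBwd n (b.1.1+1) (a.1.1+1) (fwd n b.1.1 + 1) (fwd n a.1.1 + 1) hn
          hv hu (by omega) (by omega) h).symm
    · rintro (h|h)
      · exact keyHalfFwd n (a.1.1+1) (b.1.1+1) (fwd n a.1.1 + 1) (fwd n b.1.1 + 1) hn
          hu hv (by omega) (by omega) h
      · exact (keyHalfFwd n (b.1.1+1) (a.1.1+1) (fwd n b.1.1 + 1) (fwd n a.1.1 + 1) hn
          hv hu (by omega) (by omega) h).symm
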